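/- Let p be a nonzero homogeneous polynomial of degree m in R that is semi-invariant, i.e. σ(p) = c • p for some c ∈ F. Then there exist c' ∈ F and a natural number i with i ≤ m such that p = c' • (h₁ ^ i * h₂ ^ (m - i)). -/

import Mathlib

open MvPolynomial

theorem semi_invariant_homogeneous_structure
    {F : Type*} [Field F] (u v : F) (hu : u ≠ 0)
    (σ : MvPolynomial (Fin 2) F →ₐ[F] MvPolynomial (Fin 2) F)
    (hσα : σ (X 0) = X 1)
    (hσβ : σ (X 1) = u • X 0 + v • X 1)
    (lam₁ lam₂ : F)
    (hroot₁ : lam₁ ^ 2 - v * lam₁ - u = 0)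
    (hroot₂ : lam₂ ^ 2 - v * lam₂ - u = 0)
    (hne : lam₁ ≠ lam₂)
    (hnotroot : ∀ k : ℕ, 1 ≤ k → lam₁ ^ k ≠ lam₂ ^ k)
    (m : ℕ) (p : MvPolynomial (Fin 2) F) (hp : p ≠ 0)
    (hhom : p.IsHomogeneous m)
    (c : F) (hsemi : σ p = c • p) :
    ∃ c' : F, ∃ i ≤ m,
      p = c' • ((C u * X 0 + C lam₁ * X 1) ^ i *
                (C u * X 0 + C lam₂ * X 1) ^ (m - i)) := by
  classical
  have hl1 : lam₁ ≠ 0 := by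
    rintro rfl; have := hroot₁; ring_nf at this; exact hu (neg_eq_zero.mp this)
  have hl2 : lam₂ ≠ 0 := by
    rintro rfl; have := hroot₂; ring_nf at this; exact hu (neg_eq_zero.mp this)
  have hd12 : lam₁ - lam₂ ≠ 0 := sub_ne_zero.mpr hne
  set a₁ : F := -lam₂ / (u * (lam₁ - lam₂)) with ha₁
  set a₂ : F := lam₁ / (u * (lam₁ - lam₂)) with ha₂
  set b₁ : F := 1 / (lam₁ - lam₂) with hb₁
  set b₂ : F := -1 / (lam₁ - lam₂) with hb₂
  set φ : MvPolynomial (Fin 2) F →ₐ[F] MvPolynomial (Fin 2) F :=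
    aeval ![C u * X 0 + C lam₁ * X 1, C u * X 0 + C lam₂ * X 1] with hφ
  set ψ : MvPolynomial (Fin 2) F →ₐ[F] MvPolynomial (Fin 2) F :=
    aeval ![C a₁ * X 0 + C a₂ * X 1, C b₁ * X 0 + C b₂ * X 1] with hψ
  set D : MvPolynomial (Fin 2) F →ₐ[F] MvPolynomial (Fin 2) F :=
    aeval ![C lam₁ * X 0, C lam₂ * X 1] with hD
  have hCmap : ∀ (x : F), x = 0 → (C x : MvPolynomial (Fin 2) F) = 0 := by
    intro x hx; rw [hx, map_zero]
  -- ψ ∘ φ = id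
  have hψφ : ∀ r, ψ (φ r) = r := by
    have : ψ.comp φ = AlgHom.id F _ := by
      apply MvPolynomial.algHom_ext
      intro i
      fin_cases i
      · simp only [AlgHom.comp_apply, AlgHom.id_apply, hφ, hψ, map_add, map_mul, aeval_X,
          aeval_C, algebraMap_eq, Matrix.cons_val_zero, Matrix.cons_val_one, Matrix.head_cons,
          Fin.isValue, Fin.zero_eta, Fin.mk_one]
        have e1 : (C (u * a₁ + lam₁ * b₁ - 1) : MvPolynomial (Fin 2) F) = 0 :=
            hCmap _ (by rw [ha₁, hb₁]; field_simp; ring)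
        have e2 : (C (u * a₂ + lam₁ * b₂) : MvPolynomial (Fin 2) F) = 0 :=
            hCmap _ (by rw [ha₂, hb₂]; field_simp; ring)
        simp only [map_sub, map_add, map_mul, map_one] at e1 e2
        linear_combination (X 0 : MvPolynomial (Fin 2) F) * e1 +
            (X 1 : MvPolynomial (Fin 2) F) * e2
      · simp only [AlgHom.comp_apply, AlgHom.id_apply, hφ, hψ, map_add, map_mul, aeval_X,
          aeval_C, algebraMap_eq, Matrix.cons_val_zero, Matrix.cons_val_one, Matrix.head_cons,
          Fin.isValue, Fin.zero_eta, Fin.mk_one]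
        have e1 : (C (u * a₁ + lam₂ * b₁) : MvPolynomial (Fin 2) F) = 0 :=
            hCmap _ (by rw [ha₁, hb₁]; field_simp; ring)
        have e2 : (C (u * a₂ + lam₂ * b₂ - 1) : MvPolynomial (Fin 2) F) = 0 :=
            hCmap _ (by rw [ha₂, hb₂]; field_simp; ring)
        simp only [map_sub, map_add, map_mul, map_one] at e1 e2
        linear_combination (X 0 : MvPolynomial (Fin 2) F) * e1 +
            (X 1 : MvPolynomial (Fin 2) F) * e2
    intro r; exact AlgHom.congr_fun this r
  -- φ ∘ ψ = id
  have hφψ : ∀ r, φ (ψ r) = r := by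
    have : φ.comp ψ = AlgHom.id F _ := by
      apply MvPolynomial.algHom_ext
      intro i
      fin_cases i
      · simp only [AlgHom.comp_apply, AlgHom.id_apply, hφ, hψ, map_add, map_mul, aeval_X,
          aeval_C, algebraMap_eq, Matrix.cons_val_zero, Matrix.cons_val_one, Matrix.head_cons,
          Fin.isValue, Fin.zero_eta, Fin.mk_one]
        have e1 : (C (a₁ * u + a₂ * u - 1) : MvPolynomial (Fin 2) F) = 0 :=
            hCmap _ (by rw [ha₁, ha₂]; field_simp; ring)
        have e2 : (C (a₁ * lam₁ + a₂ * lam₂) : MvPolynomial (Fin 2) F) = 0 :=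
            hCmap _ (by rw [ha₁, ha₂]; field_simp; ring)
        simp only [map_sub, map_add, map_mul, map_one] at e1 e2
        linear_combination (X 0 : MvPolynomial (Fin 2) F) * e1 +
            (X 1 : MvPolynomial (Fin 2) F) * e2
      · simp only [AlgHom.comp_apply, AlgHom.id_apply, hφ, hψ, map_add, map_mul, aeval_X,
          aeval_C, algebraMap_eq, Matrix.cons_val_zero, Matrix.cons_val_one, Matrix.head_cons,
          Fin.isValue, Fin.zero_eta, Fin.mk_one]
        have e1 : (C (b₁ * u + b₂ * u) : MvPolynomial (Fin 2) F) = 0 :=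
            hCmap _ (by rw [hb₁, hb₂]; field_simp; ring)
        have e2 : (C (b₁ * lam₁ + b₂ * lam₂ - 1) : MvPolynomial (Fin 2) F) = 0 :=
            hCmap _ (by rw [hb₁, hb₂]; field_simp; ring)
        simp only [map_sub, map_add, map_mul, map_one] at e1 e2
        linear_combination (X 0 : MvPolynomial (Fin 2) F) * e1 +
            (X 1 : MvPolynomial (Fin 2) F) * e2
    intro r; exact AlgHom.congr_fun this r
  -- σ ∘ φ = φ ∘ D
  have hσφ : ∀ r, σ (φ r) = φ (D r) := by
    have hC : ∀ a : F, σ (C a) = C a := fun a => by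
      simpa [algebraMap_eq] using σ.commutes a
    have : σ.comp φ = φ.comp D := by
      apply MvPolynomial.algHom_ext
      intro i
      fin_cases i
      · simp only [AlgHom.comp_apply, hφ, hD, map_add, map_mul, aeval_X, aeval_C, algebraMap_eq,
          Matrix.cons_val_zero, Matrix.cons_val_one, Matrix.head_cons, Fin.isValue, Fin.zero_eta,
          hσα, hσβ, hC, smul_eq_C_mul]
        have hr : ((C lam₁ : MvPolynomial (Fin 2) F)) ^ 2 - C v * C lam₁ - C u = 0 := by
          rw [← map_pow, ← map_mul, ← map_sub, ← map_sub, hroot₁, map_zero]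
        linear_combination (-(X 1 : MvPolynomial (Fin 2) F)) * hr
      · simp only [AlgHom.comp_apply, hφ, hD, map_add, map_mul, aeval_X, aeval_C, algebraMap_eq,
          Matrix.cons_val_zero, Matrix.cons_val_one, Matrix.head_cons, Fin.isValue, Fin.mk_one,
          hσα, hσβ, hC, smul_eq_C_mul]
        have hr : ((C lam₂ : MvPolynomial (Fin 2) F)) ^ 2 - C v * C lam₂ - C u = 0 := by
          rw [← map_pow, ← map_mul, ← map_sub, ← map_sub, hroot₂, map_zero]
        linear_combination (-(X 1 : MvPolynomial (Fin 2) F)) * hr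
    intro r; exact AlgHom.congr_fun this r
  -- monomial decomposition lemmas
  have mono_eq : ∀ (d : Fin 2 →₀ ℕ) (b : F),
      (monomial d b : MvPolynomial (Fin 2) F) = C b * X 0 ^ d 0 * X 1 ^ d 1 := by
    intro d b
    rw [monomial_eq, Finsupp.prod_fintype _ _ (fun i => pow_zero _), Fin.prod_univ_two]
    ring
  have Dmono : ∀ (d : Fin 2 →₀ ℕ) (b : F),
      D (monomial d b) = monomial d (b * (lam₁ ^ d 0 * lam₂ ^ d 1)) := by
    intro d b
    rw [mono_eq, map_mul, map_mul, map_pow, map_pow, hD, aeval_X, aeval_X, mono_eq]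
    simp only [Matrix.cons_val_zero, Matrix.cons_val_one, Matrix.head_cons, aeval_C,
      algebraMap_eq, map_mul, map_pow, mul_pow]
    ring
  have coeffD : ∀ (q : MvPolynomial (Fin 2) F) (d : Fin 2 →₀ ℕ),
      coeff d (D q) = (lam₁ ^ d 0 * lam₂ ^ d 1) * coeff d q := by
    intro q d
    conv_lhs => rw [q.as_sum]
    rw [map_sum, coeff_sum]
    simp only [Dmono, coeff_monomial]
    rw [Finset.sum_ite_eq' q.support d (fun d' => coeff d' q * (lam₁ ^ d' 0 * lam₂ ^ d' 1))]
    by_cases hdq : d ∈ q.support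
    · rw [if_pos hdq]; ring
    · rw [if_neg hdq, notMem_support_iff.mp hdq, mul_zero]
  -- set q
  set q : MvPolynomial (Fin 2) F := ψ p with hq
  have hpq : φ q = p := hφψ p
  have hq0 : q ≠ 0 := by
    intro h; apply hp; rw [← hpq, h, map_zero]
  have hDq : D q = c • q := by
    have h1 : φ (D q) = φ (c • q) := by
      rw [← hσφ, hpq, hsemi, map_smul, hpq]
    have := congrArg ψ h1
    rwa [hψφ, hψφ] at this
  -- q is homogeneous of degree m
  have hqhom : q.IsHomogeneous m := by
    have hg : ∀ i, ((![C a₁ * X 0 + C a₂ * X 1, C b₁ * X 0 + C b₂ * X 1] :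
        Fin 2 → MvPolynomial (Fin 2) F) i).IsHomogeneous 1 := by
      intro i
      fin_cases i
      · simp only [Matrix.cons_val_zero]
        exact (isHomogeneous_C_mul_X _ _).add (isHomogeneous_C_mul_X _ _)
      · simp only [Matrix.cons_val_one, Matrix.head_cons]
        exact (isHomogeneous_C_mul_X _ _).add (isHomogeneous_C_mul_X _ _)
    have := hhom.aeval _ hg
    rwa [one_mul] at this
  have hdeg : ∀ d ∈ q.support, d 0 + d 1 = m := by
    intro d hd
    have h := hqhom (mem_support_iff.mp hd)
    rw [← h]
    rw [Finsupp.weight_apply, Finsupp.sum_fintype _ _ (fun i => by simp), Fin.sum_univ_two]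
    simp
  have heig : ∀ d ∈ q.support, lam₁ ^ d 0 * lam₂ ^ d 1 = c := by
    intro d hd
    have h := congrArg (coeff d) hDq
    rw [coeffD, coeff_smul, smul_eq_mul] at h
    exact mul_right_cancel₀ (mem_support_iff.mp hd) h
  -- support is a singleton
  obtain ⟨d, hdmem⟩ := (support_nonempty).mpr hq0
  have huniq : ∀ d' ∈ q.support, d' = d := by
    have key : ∀ e e' : Fin 2 →₀ ℕ, e ∈ q.support → e' ∈ q.support → e 0 < e' 0 → False := by
      intro e e' he he' hlt
      have h1 := heig e he
      have h2 := heig e' he'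
      have hd1 := hdeg e he
      have hd2 := hdeg e' he'
      set k := e' 0 - e 0 with hk
      have hk1 : 1 ≤ k := by omega
      have he'0 : e' 0 = e 0 + k := by omega
      have he1 : e 1 = e' 1 + k := by omega
      rw [he'0] at h2
      rw [he1] at h1
      rw [pow_add] at h1 h2
      apply hnotroot k hk1
      have h3 : lam₂ ^ k * (lam₁ ^ e 0 * lam₂ ^ e' 1) = lam₁ ^ k * (lam₁ ^ e 0 * lam₂ ^ e' 1) := by
        linear_combination h1 - h2
      exact (mul_right_cancel₀ (mul_ne_zero (pow_ne_zero _ hl1) (pow_ne_zero _ hl2)) h3).symm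
    intro d' hd'
    rcases lt_trichotomy (d' 0) (d 0) with h | h | h
    · exact absurd (key d' d hd' hdmem h) (by simp)
    · have h1 : d' 1 = d 1 := by
        have := hdeg d' hd'; have := hdeg d hdmem; omega
      ext i
      fin_cases i
      · exact h
      · exact h1
    · exact absurd (key d d' hdmem hd' h) (by simp)
  have hsupp : q.support = {d} := by
    apply Finset.eq_singleton_iff_unique_mem.mpr ⟨hdmem, huniq⟩
  have hqmono : q = monomial d (coeff d q) := by
    conv_lhs => rw [q.as_sum]
    rw [hsupp, Finset.sum_singleton]
  -- conclude
  refine ⟨coeff d q, d 0, ?_, ?_⟩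
  · have := hdeg d hdmem; omega
  · have hm : m - d 0 = d 1 := by have := hdeg d hdmem; omega
    rw [hm]
    conv_lhs => rw [← hpq, hqmono]
    rw [mono_eq, map_mul, map_mul, map_pow, map_pow]
    simp only [hφ, aeval_X, aeval_C, algebraMap_eq, Matrix.cons_val_zero, Matrix.cons_val_one,
      Matrix.head_cons, smul_eq_C_mul]
    ring
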